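/- Let Q > R ≥ 1, ℓ ≥ 1, and n ≥ 1 be integers, Σ a finite alphabet with |Σ| = Q, and Σ' ⊆ Σ with |Σ'| = R. Then |RLL_{Q,R}(ℓ,n)| ≤ Q^n · (1 − (R/Q)^ℓ · (1 + ℓ·(1 − R/Q)))^{⌊n/(2ℓ)⌋}. -/

import Mathlib

open Finset Real

/-- A sequence `x ∈ Σⁿ` is `ℓ`-run-length-limited if every window of `ℓ`
consecutive symbols contains at least one symbol outside `S'`. -/
def IsRLL {σ : Type*} (S' : Finset σ) (ℓ : ℕ) {n : ℕ} (x : Fin n → σ) : Prop :=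
  ∀ i : ℕ, (h : i + ℓ ≤ n) → ∃ k : ℕ, ∃ hk : k < ℓ, x ⟨i + k, by omega⟩ ∉ S'

lemma fin_congr_aux {σ : Type*} {n : ℕ} (x : Fin n → σ) {a b : ℕ} (ha : a < n) (hb : b < n)
    (h : a = b) : x ⟨a, ha⟩ = x ⟨b, hb⟩ := by subst h; rfl

lemma count_Bi {σ : Type*} [Fintype σ] [DecidableEq σ] (Q R ℓ : ℕ)
    (hQR : R < Q) (hℓ : 1 ≤ ℓ) (hσ : Fintype.card σ = Q)
    (S' : Finset σ) (hS' : S'.card = R) (i : ℕ) (hi : i ≤ ℓ) :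
    (Fintype.piFinset (fun t : Fin (2 * ℓ) =>
      if i ≤ (t : ℕ) ∧ (t : ℕ) < i + ℓ then S'
      else if (t : ℕ) + 1 = i then S'ᶜ else (univ : Finset σ))).card
      = if i = 0 then R ^ ℓ * Q ^ ℓ else (Q - R) * (R ^ ℓ * Q ^ (ℓ - 1)) := by
  rw [Fintype.card_piFinset]
  set g : ℕ → ℕ := fun u => if i ≤ u ∧ u < i + ℓ then R else if u + 1 = i then Q - R else Q
    with hg
  have hcard : ∀ t : Fin (2 * ℓ),
      (if i ≤ (t : ℕ) ∧ (t : ℕ) < i + ℓ then S'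
        else if (t : ℕ) + 1 = i then S'ᶜ else (univ : Finset σ)).card = g (t : ℕ) := by
    intro t
    by_cases h1 : i ≤ (t : ℕ) ∧ (t : ℕ) < i + ℓ
    · simp [hg, h1, hS']
    · by_cases h2 : (t : ℕ) + 1 = i
      · simp [hg, h1, h2, Finset.card_compl, hσ, hS']
      · simp [hg, h1, h2, hσ]
  rw [Finset.prod_congr rfl (fun t _ => hcard t), Fin.prod_univ_eq_prod_range g]
  have hmid : ∏ u ∈ Ico i (i + ℓ), g u = R ^ ℓ := by
    have hpt : ∀ u ∈ Ico i (i + ℓ), g u = R := by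
      intro u hu; rw [Finset.mem_Ico] at hu; simp [hg, hu]
    rw [Finset.prod_congr rfl hpt, Finset.prod_const, Nat.card_Ico]
    congr 1; omega
  have hlast : ∏ u ∈ Ico (i + ℓ) (2 * ℓ), g u = Q ^ (2 * ℓ - (i + ℓ)) := by
    have hpt : ∀ u ∈ Ico (i + ℓ) (2 * ℓ), g u = Q := by
      intro u hu; rw [Finset.mem_Ico] at hu
      have h1 : ¬ (i ≤ u ∧ u < i + ℓ) := by omega
      have h2 : ¬ (u + 1 = i) := by omega
      simp [hg, h1, h2]
    rw [Finset.prod_congr rfl hpt, Finset.prod_const, Nat.card_Ico]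
  rw [Finset.range_eq_Ico, ← Finset.prod_Ico_consecutive g (Nat.zero_le i) (by omega),
    ← Finset.prod_Ico_consecutive g (Nat.le_add_right i ℓ) (by omega),
    hmid, hlast]
  rcases Nat.eq_zero_or_pos i with h0 | h0
  · subst h0
    rw [if_pos rfl]
    have he : 2 * ℓ - (0 + ℓ) = ℓ := by omega
    rw [he]; simp
  · obtain ⟨s, rfl⟩ : ∃ s, i = s + 1 := ⟨i - 1, by omega⟩
    rw [if_neg (by omega)]
    have hfirst : ∏ u ∈ Ico 0 (s + 1), g u = Q ^ s * (Q - R) := by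
      rw [Finset.prod_Ico_succ_top (Nat.zero_le s)]
      have hgs : g s = Q - R := by
        simp only [hg]; rw [if_neg (by omega)]; simp
      have hQs : ∀ u ∈ Ico 0 s, g u = Q := by
        intro u hu; rw [Finset.mem_Ico] at hu
        have h1 : ¬ (s + 1 ≤ u ∧ u < s + 1 + ℓ) := by omega
        have h2 : ¬ (u + 1 = s + 1) := by omega
        simp only [hg]; rw [if_neg h1, if_neg h2]
      rw [Finset.prod_congr rfl hQs, Finset.prod_const, Nat.card_Ico, hgs,
        Nat.sub_zero]
    rw [hfirst]
    obtain ⟨d, hd⟩ : ∃ d, ℓ - 1 = s + d := ⟨ℓ - 1 - s, by omega⟩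
    have he : 2 * ℓ - (s + 1 + ℓ) = d := by omega
    rw [he, hd, pow_add]
    ring



/-- Upper bound on the number of ℓ-RLL sequences of length n. -/
theorem rll_card_upper_bound {σ : Type*} [Fintype σ] (Q R ℓ n : ℕ)
    (hR : 1 ≤ R) (hQR : R < Q) (hℓ : 1 ≤ ℓ) (hn : 1 ≤ n)
    (hσ : Fintype.card σ = Q) (S' : Finset σ) (hS' : S'.card = R) :
    ({x : Fin n → σ | IsRLL S' ℓ x}.ncard : ℝ) ≤
      (Q : ℝ) ^ n *
        (1 - ((R : ℝ) / Q) ^ ℓ * (1 + (ℓ : ℝ) * (1 - (R : ℝ) / Q))) ^ (n / (2 * ℓ)) := by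
  classical
  set m := n / (2 * ℓ) with hm
  have hm2 : 2 * ℓ * m ≤ n := by
    rw [hm, mul_comm]; exact Nat.div_mul_le_self n (2 * ℓ)
  set r := n - 2 * ℓ * m with hrdef
  have hr : 2 * ℓ * m + r = n := Nat.add_sub_cancel' hm2
  have hblock : ∀ (j : Fin m) (t : Fin (2 * ℓ)), 2 * ℓ * j.val + t.val < n := by
    intro j t
    have h1 : 2 * ℓ * (j.val + 1) ≤ 2 * ℓ * m := Nat.mul_le_mul_left (2 * ℓ) j.isLt
    have h2 : 2 * ℓ * (j.val + 1) = 2 * ℓ * j.val + 2 * ℓ := by ring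
    have h3 := t.isLt
    linarith
  have hrem : ∀ (t : Fin r), 2 * ℓ * m + t.val < n := by
    intro t
    calc 2 * ℓ * m + t.val < 2 * ℓ * m + r := Nat.add_lt_add_left t.isLt _
      _ = n := hr
  set Good : Finset (Fin (2 * ℓ) → σ) := univ.filter (fun w => IsRLL S' ℓ w) with hGoodDef
  set Bad : Finset (Fin (2 * ℓ) → σ) := univ.filter (fun w => ¬ IsRLL S' ℓ w) with hBadDef
  -- step 1: cardinality bound via block decomposition
  have hfin : {x : Fin n → σ | IsRLL S' ℓ x}.Finite := Set.toFinite _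
  have step1 : hfin.toFinset.card ≤ Good.card ^ m * Q ^ r := by
    have hletarget :
        ((Fintype.piFinset fun _ : Fin m => Good) ×ˢ (univ : Finset (Fin r → σ))).card
          = Good.card ^ m * Q ^ r := by
      rw [Finset.card_product, Fintype.card_piFinset]
      simp [Finset.card_univ, Fintype.card_fun, hσ]
    rw [← hletarget]
    apply Finset.card_le_card_of_injOn
      (fun x => (fun j t => x ⟨2 * ℓ * j.val + t.val, hblock j t⟩,
                 fun t => x ⟨2 * ℓ * m + t.val, hrem t⟩))
    · intro x hx
      rw [Finset.mem_coe, Set.Finite.mem_toFinset] at hx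
      rw [Finset.mem_coe, Finset.mem_product]
      constructor
      · rw [Fintype.mem_piFinset]
        intro j
        rw [hGoodDef, Finset.mem_filter]
        refine ⟨Finset.mem_univ _, ?_⟩
        intro i hi
        have hin : (2 * ℓ * j.val + i) + ℓ ≤ n := by
          have h1 : 2 * ℓ * (j.val + 1) ≤ 2 * ℓ * m := Nat.mul_le_mul_left (2 * ℓ) j.isLt
          have h2 : 2 * ℓ * (j.val + 1) = 2 * ℓ * j.val + 2 * ℓ := by ring
          linarith
        obtain ⟨k, hk, hxk⟩ := hx (2 * ℓ * j.val + i) hin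
        refine ⟨k, hk, ?_⟩
        have heq : x ⟨2 * ℓ * j.val + (i + k), hblock j ⟨i + k, by omega⟩⟩
            = x ⟨2 * ℓ * j.val + i + k, by omega⟩ :=
          fin_congr_aux x _ _ (add_assoc _ _ _).symm
        show x ⟨2 * ℓ * j.val + (i + k), hblock j ⟨i + k, by omega⟩⟩ ∉ S'
        rw [heq]
        exact hxk
      · exact Finset.mem_univ _
    · intro x hx y hy hxy
      have h1 : ∀ (j : Fin m) (t : Fin (2 * ℓ)),
          x ⟨2 * ℓ * j.val + t.val, hblock j t⟩ = y ⟨2 * ℓ * j.val + t.val, hblock j t⟩ :=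
        fun j t => congrFun (congrFun (congrArg Prod.fst hxy) j) t
      have h2 : ∀ (t : Fin r),
          x ⟨2 * ℓ * m + t.val, hrem t⟩ = y ⟨2 * ℓ * m + t.val, hrem t⟩ :=
        fun t => congrFun (congrArg Prod.snd hxy) t
      funext i
      obtain ⟨iv, hiv⟩ := i
      rcases lt_or_ge iv (2 * ℓ * m) with h | h
      · have hj : iv / (2 * ℓ) < m := Nat.div_lt_of_lt_mul h
        have ht : iv % (2 * ℓ) < 2 * ℓ := Nat.mod_lt _ (by omega)
        have hiv' : 2 * ℓ * (iv / (2 * ℓ)) + iv % (2 * ℓ) = iv := Nat.div_add_mod iv (2 * ℓ)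
        calc x ⟨iv, hiv⟩
            = x ⟨2 * ℓ * (iv / (2 * ℓ)) + iv % (2 * ℓ), hblock ⟨_, hj⟩ ⟨_, ht⟩⟩ :=
              fin_congr_aux x _ _ hiv'.symm
          _ = y ⟨2 * ℓ * (iv / (2 * ℓ)) + iv % (2 * ℓ), hblock ⟨_, hj⟩ ⟨_, ht⟩⟩ :=
              h1 ⟨_, hj⟩ ⟨_, ht⟩
          _ = y ⟨iv, hiv⟩ := fin_congr_aux y _ _ hiv'
      · have ht : iv - 2 * ℓ * m < r := by
          rw [hrdef]; exact Nat.sub_lt_sub_right h hiv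
        have hiv' : 2 * ℓ * m + (iv - 2 * ℓ * m) = iv := by
          exact Nat.add_sub_cancel' h
        calc x ⟨iv, hiv⟩
            = x ⟨2 * ℓ * m + (iv - 2 * ℓ * m), hrem ⟨_, ht⟩⟩ := fin_congr_aux x _ _ hiv'.symm
          _ = y ⟨2 * ℓ * m + (iv - 2 * ℓ * m), hrem ⟨_, ht⟩⟩ := h2 ⟨_, ht⟩
          _ = y ⟨iv, hiv⟩ := fin_congr_aux y _ _ hiv'
  -- step 2: Good.card + Bad.card = Q ^ (2ℓ)
  have step2 : Good.card + Bad.card = Q ^ (2 * ℓ) := by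
    rw [hGoodDef, hBadDef, Finset.card_filter_add_card_filter_not,
      Finset.card_univ, Fintype.card_fun, hσ, Fintype.card_fin]
  -- step 3: lower bound on Bad.card
  have step3 : R ^ ℓ * Q ^ ℓ + ℓ * ((Q - R) * (R ^ ℓ * Q ^ (ℓ - 1))) ≤ Bad.card := by
    set C : ℕ → Fin (2 * ℓ) → Finset σ := fun i t =>
      if i ≤ (t : ℕ) ∧ (t : ℕ) < i + ℓ then S'
      else if (t : ℕ) + 1 = i then S'ᶜ else (univ : Finset σ) with hC
    set B : ℕ → Finset (Fin (2 * ℓ) → σ) := fun i => Fintype.piFinset (C i) with hB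
    have hsub : ∀ i ∈ Finset.range (ℓ + 1), B i ⊆ Bad := by
      intro i hi w hw
      rw [Finset.mem_range] at hi
      rw [hB, Fintype.mem_piFinset] at hw
      rw [hBadDef, Finset.mem_filter]
      refine ⟨Finset.mem_univ _, ?_⟩
      intro hRLL
      obtain ⟨k, hk, hwk⟩ := hRLL i (by omega)
      have := hw ⟨i + k, by omega⟩
      rw [hC] at this
      simp only [if_pos (show i ≤ i + k ∧ i + k < i + ℓ by omega)] at this
      exact hwk this
    have key : ∀ i j : ℕ, i < j → j < ℓ + 1 → Disjoint (B i) (B j) := by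
      intro i j hlt hj
      rw [Finset.disjoint_left]
      intro w hwi hwj
      rw [hB, Fintype.mem_piFinset] at hwi hwj
      have hti := hwi ⟨j - 1, by omega⟩
      have htj := hwj ⟨j - 1, by omega⟩
      rw [hC] at hti htj
      simp only [if_pos (show i ≤ j - 1 ∧ j - 1 < i + ℓ by omega)] at hti
      simp only [if_neg (show ¬ (j ≤ j - 1 ∧ j - 1 < j + ℓ) by omega),
        if_pos (show j - 1 + 1 = j by omega)] at htj
      exact absurd hti (Finset.mem_compl.mp htj)
    have hdisj : (Finset.range (ℓ + 1) : Set ℕ).Pairwise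
        (Function.onFun Disjoint fun i => B i) := by
      intro i hi j hj hij
      simp only [Finset.coe_range, Set.mem_Iio] at hi hj
      rcases hij.lt_or_gt with h | h
      · exact key i j h hj
      · exact (key j i h hi).symm
    have hunion : ((Finset.range (ℓ + 1)).biUnion B).card ≤ Bad.card :=
      Finset.card_le_card (Finset.biUnion_subset.mpr hsub)
    rw [Finset.card_biUnion hdisj] at hunion
    have hsum : ∑ i ∈ Finset.range (ℓ + 1), (B i).card
        = R ^ ℓ * Q ^ ℓ + ℓ * ((Q - R) * (R ^ ℓ * Q ^ (ℓ - 1))) := by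
      have hBi : ∀ i ∈ Finset.range (ℓ + 1), (B i).card
          = if i = 0 then R ^ ℓ * Q ^ ℓ else (Q - R) * (R ^ ℓ * Q ^ (ℓ - 1)) := by
        intro i hi
        rw [Finset.mem_range] at hi
        exact count_Bi Q R ℓ hQR hℓ hσ S' hS' i (by omega)
      rw [Finset.sum_congr rfl hBi, Finset.sum_range_succ']
      simp [add_comm, mul_comm]
    rw [hsum] at hunion
    exact hunion
  -- endgame: real arithmetic
  rw [Set.ncard_eq_toFinset_card _ hfin]
  set p : ℝ := ((R : ℝ) / Q) ^ ℓ * (1 + (ℓ : ℝ) * (1 - (R : ℝ) / Q)) with hp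
  have hQ0 : (0 : ℝ) < (Q : ℝ) := by
    have : 0 < Q := by omega
    exact_mod_cast this
  have hcastD : ((R ^ ℓ * Q ^ ℓ + ℓ * ((Q - R) * (R ^ ℓ * Q ^ (ℓ - 1))) : ℕ) : ℝ)
      = (R : ℝ) ^ ℓ * (Q : ℝ) ^ ℓ
        + (ℓ : ℝ) * (((Q : ℝ) - (R : ℝ)) * ((R : ℝ) ^ ℓ * (Q : ℝ) ^ (ℓ - 1))) := by
    push_cast [Nat.cast_sub hQR.le]
    ring
  have hE : (Q : ℝ) ^ (2 * ℓ) * (1 - p)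
      = (Q : ℝ) ^ (2 * ℓ) - ((R : ℝ) ^ ℓ * (Q : ℝ) ^ ℓ
        + (ℓ : ℝ) * (((Q : ℝ) - (R : ℝ)) * ((R : ℝ) ^ ℓ * (Q : ℝ) ^ (ℓ - 1)))) := by
    obtain ⟨s, rfl⟩ : ∃ s, ℓ = s + 1 := ⟨ℓ - 1, by omega⟩
    rw [hp]
    have h1 : (s + 1 : ℕ) - 1 = s := rfl
    rw [h1]
    have hQ : (Q:ℝ) ≠ 0 := hQ0.ne'
    rw [div_pow, show 2 * (s+1) = (s+1) + s + 1 by ring, pow_add, pow_add]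
    field_simp
    ring
  have hGoodR : (Good.card : ℝ) ≤ (Q : ℝ) ^ (2 * ℓ) * (1 - p) := by
    rw [hE]
    have h2 : (Good.card : ℝ) + (Bad.card : ℝ) = (Q : ℝ) ^ (2 * ℓ) := by
      exact_mod_cast step2
    have h3 : (R : ℝ) ^ ℓ * (Q : ℝ) ^ ℓ
        + (ℓ : ℝ) * (((Q : ℝ) - (R : ℝ)) * ((R : ℝ) ^ ℓ * (Q : ℝ) ^ (ℓ - 1)))
        ≤ (Bad.card : ℝ) := by
      rw [← hcastD]
      exact_mod_cast step3
    linarith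
  have h1mp : (0 : ℝ) ≤ 1 - p := by
    by_contra h
    push_neg at h
    have hg0 : (0 : ℝ) ≤ (Good.card : ℝ) := Nat.cast_nonneg _
    nlinarith [pow_pos hQ0 (2 * ℓ)]
  calc (hfin.toFinset.card : ℝ)
      ≤ ((Good.card ^ m * Q ^ r : ℕ) : ℝ) := by exact_mod_cast step1
    _ = (Good.card : ℝ) ^ m * (Q : ℝ) ^ r := by push_cast; ring
    _ ≤ ((Q : ℝ) ^ (2 * ℓ) * (1 - p)) ^ m * (Q : ℝ) ^ r := by
        refine mul_le_mul_of_nonneg_right ?_ (by positivity)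
        exact pow_le_pow_left₀ (Nat.cast_nonneg _) hGoodR m
    _ = (Q : ℝ) ^ n * (1 - p) ^ m := by
        rw [mul_pow, ← pow_mul,
          show (Q : ℝ) ^ (2 * ℓ * m) * (1 - p) ^ m * (Q : ℝ) ^ r
            = (Q : ℝ) ^ (2 * ℓ * m) * (Q : ℝ) ^ r * (1 - p) ^ m from by ring,
          ← pow_add, hr]
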